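/- arXiv:math/0601348 — 2 statements merged into one kernel-verified Lean document; each statement's English description precedes it below -/
import Mathlib

section
/- For partitions λ and μ with at most d parts, define TW(λ,μ) = det(A·B), where A is the d×∞ matrix with entries A_{i,k} = h̃_{i−k+μ_{d−i+1}} and B is the ∞×d matrix with entries B_{k,j} = h_{j−k+λ_{d−j+1}} (indices k ≥ 1; h_m = h̃_m = 0 for m < 0, so the product is well-defined). Then by the Cauchy–Binet formula, TW(λ,μ) = Σ_ν s_{λ/ν}(X) s̃_{μ/ν}(Y), the sum over all partitions ν with at most d parts. -/
open Finset MvPolynomial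

open scoped Classical

noncomputable section

/-- The ring of symmetric functions over `ℚ`, presented via the power sums
`p 1, p 2, …` as free commutative generators (variable `i` corresponds to `p (i+1)`). -/
abbrev SymF : Type := MvPolynomial ℕ ℚ

/-- The ring of symmetric functions in two independent countable variable sets `X`, `Y`. -/
abbrev SymF2 : Type := MvPolynomial (ℕ ⊕ ℕ) ℚ

/-- The power sum `p k` (for `k ≥ 1`). -/
def P (k : ℕ) : SymF := X (k - 1)

/-- The power sum `p k (X)` in the first variable set. -/
def PX (k : ℕ) : SymF2 := X (Sum.inl (k - 1))

/-- The power sum `p̃ k (Y)` in the second variable set. -/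
def PY (k : ℕ) : SymF2 := X (Sum.inr (k - 1))

/-- `z λ = ∏ i, i ^ m_i(λ) * m_i(λ)!`, where `m_i(λ)` is the number of parts of `λ` equal to `i`. -/
def zPart {n : ℕ} (μ : n.Partition) : ℚ :=
  (μ.parts.map fun i => (i : ℚ)).prod *
    ∏ i ∈ μ.parts.toFinset, (Nat.factorial (μ.parts.count i) : ℚ)

/-- `p_μ = ∏ i p_{μ_i}`, generically: given the values `pv k` of the power sums. -/
def pPart {A : Type} [CommRing A] (pv : ℕ → A) {n : ℕ} (μ : n.Partition) : A :=
  (μ.parts.map pv).prod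

/-- The complete homogeneous symmetric function `h_n = ∑_{μ ⊢ n} z_μ⁻¹ p_μ`, generically. -/
def hFun {A : Type} [CommRing A] [Algebra ℚ A] (pv : ℕ → A) (n : ℕ) : A :=
  ∑ μ : n.Partition, (zPart μ)⁻¹ • pPart pv μ

/-- `h_m` for an integer index, with `h_m = 0` for `m < 0`. -/
def hInt {A : Type} [CommRing A] [Algebra ℚ A] (pv : ℕ → A) (m : ℤ) : A :=
  if m < 0 then 0 else hFun pv m.toNat

/-- The `i`-th largest part (1-indexed) of a partition; `0` if `i` exceeds the length. -/
def nthPart {n : ℕ} (μ : n.Partition) (i : ℕ) : ℕ :=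
  ((μ.parts.sort (· ≤ ·)).reverse).getD (i - 1) 0

/-- The Schur function `s_λ`, via the Jacobi–Trudi determinant
`det (h_{λ_i - i + j})`, given the values `hv` of the complete homogeneous functions. -/
def schurJT {A : Type} [CommRing A] (hv : ℤ → A) {n : ℕ} (lam : n.Partition) : A :=
  Matrix.det (Matrix.of fun i j : Fin lam.parts.card =>
    hv ((nthPart lam ((i : ℕ) + 1) : ℤ) - ((i : ℕ) + 1) + ((j : ℕ) + 1)))

/-- The skew Schur function `s_{λ/ν}`, via the Jacobi–Trudi determinant
`det (h_{λ_i - ν_j - i + j})_{d × d}` (valid whenever `d ≥ max (l(λ), l(ν))`). -/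
def skewJT {A : Type} [CommRing A] (hv : ℤ → A) {n m : ℕ}
    (lam : n.Partition) (nu : m.Partition) (d : ℕ) : A :=
  Matrix.det (Matrix.of fun i j : Fin d =>
    hv ((nthPart lam ((i : ℕ) + 1) : ℤ) - nthPart nu ((j : ℕ) + 1)
      - ((i : ℕ) + 1) + ((j : ℕ) + 1)))

/-- The Schur function `s_λ` in the ring of symmetric functions. -/
def schurF {n : ℕ} (lam : n.Partition) : SymF := schurJT (hInt P) lam

/-- The Schur function `s_λ(X)` in the first variable set. -/
def sX {n : ℕ} (lam : n.Partition) : SymF2 := schurJT (hInt PX) lam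

/-- The Schur function `s_μ(Y)` in the second variable set. -/
def sY {n : ℕ} (lam : n.Partition) : SymF2 := schurJT (hInt PY) lam

/-- `B` is the Hall inner product: the bilinear form making the Schur functions orthonormal. -/
def IsHall (B : SymF →ₗ[ℚ] SymF →ₗ[ℚ] ℚ) : Prop :=
  ∀ {n m : ℕ} (lam : n.Partition) (mu : m.Partition),
    B (schurF lam) (schurF mu) =
      if (⟨n, lam⟩ : Σ k : ℕ, k.Partition) = ⟨m, mu⟩ then 1 else 0

/-- `B` is the Hall inner product on `Λ(X) ⊗ Λ(Y)`: the bilinear form making the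
products of Schur functions `s_λ(X) s_μ(Y)` orthonormal. -/
def IsHall2 (B : SymF2 →ₗ[ℚ] SymF2 →ₗ[ℚ] ℚ) : Prop :=
  ∀ {n m n' m' : ℕ} (a : n.Partition) (b : m.Partition) (c : n'.Partition) (e : m'.Partition),
    B (sX a * sY b) (sX c * sY e) =
      if (⟨n, a⟩ : Σ k : ℕ, k.Partition) = ⟨n', c⟩ ∧
         (⟨m, b⟩ : Σ k : ℕ, k.Partition) = ⟨m', e⟩ then 1 else 0


/-- The Tracy–Widom matrix: the `d × d` product `A · B` of the half-strip matrices
`A = (h̃_{i-k+μ_{d-i+1}})_{d × ∞}` and `B = (h_{j-k+λ_{d-j+1}})_{∞ × d}`; the inner sum over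
`k ≥ 1` is truncated at `d + n + m`, beyond which all terms vanish. -/
def TWmat {n m : ℕ} (lam : n.Partition) (mu : m.Partition) (d : ℕ) :
    Matrix (Fin d) (Fin d) SymF2 :=
  Matrix.of fun i j => ∑ k ∈ Icc 1 (d + n + m),
    hInt PY (((i : ℕ) : ℤ) + 1 - (k : ℤ) + nthPart mu (d - (i : ℕ))) *
    hInt PX (((j : ℕ) : ℤ) + 1 - (k : ℤ) + nthPart lam (d - (j : ℕ)))


namespace TW11

open Equiv Function

variable {R : Type} [CommRing R]

variable {R : Type} [CommRing R]

lemma cb_aux {d : ℕ} {ι : Type} (A : Matrix (Fin d) ι R) (B : Matrix ι (Fin d) R)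
    {p : Fin d → ι} (H : ¬Function.Injective p) :
    (∑ σ : Equiv.Perm (Fin d),
      ((Equiv.Perm.sign σ : ℤ) : R) * ∏ x, A (σ x) (p x) * B (p x) x) = 0 := by
  obtain ⟨i, j, hpij, hij⟩ : ∃ i j, p i = p j ∧ i ≠ j := by
    rw [Function.Injective] at H
    push_neg at H
    obtain ⟨i, j, h, hne⟩ := H
    exact ⟨i, j, h, hne⟩
  exact Finset.sum_involution (fun σ _ => σ * Equiv.swap i j)
    (fun σ _ => by
      have : (∏ x, A (σ x) (p x)) = ∏ x, A ((σ * Equiv.swap i j) x) (p x) :=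
        Fintype.prod_equiv (Equiv.swap i j) _ _ (by simp [Equiv.apply_swap_eq_self hpij])
      simp [this, Equiv.Perm.sign_swap hij, prod_mul_distrib])
    (fun σ _ _ => (not_congr Equiv.mul_swap_eq_iff).mpr hij)
    (fun _ _ => mem_univ _) fun σ _ => Equiv.mul_swap_involutive i j σ

lemma sum_perm_eq_det_mul {mty : Type} [Fintype mty] [DecidableEq mty]
    (M N : Matrix mty mty R) :
    (∑ τ : Equiv.Perm mty, ∑ σ : Equiv.Perm mty,
      ((Equiv.Perm.sign σ : ℤ) : R) * ∏ i, M (σ i) (τ i) * N (τ i) i) = M.det * N.det :=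
  calc
    (∑ τ : Equiv.Perm mty, ∑ σ : Equiv.Perm mty,
        ((Equiv.Perm.sign σ : ℤ) : R) * ∏ i, M (σ i) (τ i) * N (τ i) i)
      = ∑ σ : Equiv.Perm mty, ∑ τ : Equiv.Perm mty,
          (∏ i, N (σ i) i) * ((Equiv.Perm.sign τ : ℤ) : R) * ∏ j, M (τ j) (σ j) := by
        simp only [mul_comm, mul_left_comm, prod_mul_distrib, mul_assoc]
    _ = ∑ σ : Equiv.Perm mty, ∑ τ : Equiv.Perm mty,
          (∏ i, N (σ i) i) * (((Equiv.Perm.sign σ : ℤ) : R) * ((Equiv.Perm.sign τ : ℤ) : R)) *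
            ∏ i, M (τ i) i :=
      (sum_congr rfl fun σ _ =>
        Fintype.sum_equiv (Equiv.mulRight σ⁻¹) _ _ fun τ => by
          have : (∏ j, M (τ j) (σ j)) = ∏ j, M ((τ * σ⁻¹) j) j := by
            rw [← (σ⁻¹ : _ ≃ _).prod_comp]
            simp only [Equiv.Perm.coe_mul, Equiv.Perm.inv_def, Equiv.apply_symm_apply, Function.comp_apply]
          have h : ((Equiv.Perm.sign σ : ℤ) : R) * ((Equiv.Perm.sign (τ * σ⁻¹) : ℤ) : R) =
              ((Equiv.Perm.sign τ : ℤ) : R) :=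
            calc
              ((Equiv.Perm.sign σ : ℤ) : R) * ((Equiv.Perm.sign (τ * σ⁻¹) : ℤ) : R) =
                  ((Equiv.Perm.sign (τ * σ⁻¹ * σ) : ℤ) : R) := by
                rw [mul_comm, Equiv.Perm.sign_mul (τ * σ⁻¹)]
                simp only [Int.cast_mul, Units.val_mul]
              _ = ((Equiv.Perm.sign τ : ℤ) : R) := by simp only [inv_mul_cancel_right]
          simp_rw [Equiv.coe_mulRight, h]
          simp only [this])
    _ = M.det * N.det := by
      simp only [Matrix.det_apply', Finset.mul_sum, mul_comm, mul_left_comm, mul_assoc]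

lemma cauchyBinet {d : ℕ} {ι : Type} [Fintype ι] [LinearOrder ι]
    (A : Matrix (Fin d) ι R) (B : Matrix ι (Fin d) R) :
    (Matrix.of fun i j => ∑ k : ι, A i k * B k j).det
      = ∑ f ∈ (univ : Finset (Fin d → ι)).filter StrictMono,
          (Matrix.of fun i j : Fin d => A i (f j)).det *
          (Matrix.of fun i j : Fin d => B (f i) j).det := by
  have step1 : (Matrix.of fun i j => ∑ k : ι, A i k * B k j).det
      = ∑ p : Fin d → ι, ∑ σ : Equiv.Perm (Fin d),
          ((Equiv.Perm.sign σ : ℤ) : R) * ∏ i, A (σ i) (p i) * B (p i) i := by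
    simp only [Matrix.det_apply', Matrix.of_apply, Finset.prod_univ_sum, Finset.mul_sum,
      Fintype.piFinset_univ]
    rw [Finset.sum_comm]
  rw [step1, ← Finset.sum_filter_add_sum_filter_not univ (fun p : Fin d → ι => Function.Injective p)]
  have h2 : (∑ p ∈ univ.filter (fun p : Fin d → ι => ¬ Function.Injective p),
      ∑ σ : Equiv.Perm (Fin d),
        ((Equiv.Perm.sign σ : ℤ) : R) * ∏ i, A (σ i) (p i) * B (p i) i) = 0 := by
    refine Finset.sum_eq_zero fun p hp => cb_aux A B ?_
    simpa using (Finset.mem_filter.mp hp).2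
  rw [h2, add_zero]
  have step3 : (∑ q ∈ ((univ : Finset (Fin d → ι)).filter StrictMono) ×ˢ
        (univ : Finset (Equiv.Perm (Fin d))),
      ∑ σ : Equiv.Perm (Fin d),
        ((Equiv.Perm.sign σ : ℤ) : R) * ∏ i, A (σ i) (q.1 (q.2 i)) * B (q.1 (q.2 i)) i)
      = ∑ p ∈ univ.filter (fun p : Fin d → ι => Function.Injective p),
          ∑ σ : Equiv.Perm (Fin d),
            ((Equiv.Perm.sign σ : ℤ) : R) * ∏ i, A (σ i) (p i) * B (p i) i := by
    have hsm : ∀ q : (Fin d → ι) × Equiv.Perm (Fin d),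
        q ∈ ((univ : Finset (Fin d → ι)).filter StrictMono) ×ˢ
          (univ : Finset (Equiv.Perm (Fin d))) → StrictMono q.1 := fun q hq => by
      simpa using (Finset.mem_filter.mp (Finset.mem_product.mp hq).1).2
    have himg : ∀ (f : Fin d → ι) (τ : Equiv.Perm (Fin d)),
        Finset.image (f ∘ τ) univ = Finset.image f univ := fun f τ => by
      rw [← Finset.image_image]
      congr 1
      exact Finset.image_univ_equiv τ
    have hcard : ∀ {p : Fin d → ι}, Function.Injective p →
        (Finset.image p univ).card = d := fun {p} hp => by
      rw [Finset.card_image_of_injective _ hp, Finset.card_univ, Fintype.card_fin]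
    have huniq : ∀ {p : Fin d → ι} (hp : StrictMono p),
        p = (Finset.image p univ).orderEmbOfFin (hcard hp.injective) := fun {p} hp =>
      Finset.orderEmbOfFin_unique _ (fun i => Finset.mem_image_of_mem _ (mem_univ i)) hp
    refine Finset.sum_bij (fun q _ => q.1 ∘ q.2) ?_ ?_ ?_ ?_
    · intro q hq
      exact Finset.mem_filter.mpr ⟨mem_univ _, ((hsm q hq).injective).comp q.2.injective⟩
    · rintro ⟨f, τ⟩ hq ⟨f', τ'⟩ hq' heq
      have hf : StrictMono f := hsm _ hq
      have hf' : StrictMono f' := hsm _ hq'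
      simp only at heq
      have himg2 : Finset.image f univ = Finset.image f' univ := by
        rw [← himg f τ, ← himg f' τ', heq]
      have hff' : f = f' := by
        rw [huniq hf, huniq hf']
        simp only [himg2]
      subst hff'
      have : τ = τ' := Equiv.ext fun i => hf.injective (congrFun heq i)
      rw [this]
    · intro p hp
      have hpinj : Function.Injective p := by simpa using (Finset.mem_filter.mp hp).2
      set s := Finset.image p univ with hs
      have hsc : s.card = d := hcard hpinj
      set f : Fin d → ι := fun i => s.orderEmbOfFin hsc i with hfdef
      have hg : Function.Injective fun i => (s.orderIsoOfFin hsc).symm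
          ⟨p i, Finset.mem_image_of_mem _ (mem_univ i)⟩ := by
        intro a b hab
        have := congrArg (fun x => ((s.orderIsoOfFin hsc) x : ι)) hab
        simp only [OrderIso.apply_symm_apply] at this
        exact hpinj this
      set τ : Equiv.Perm (Fin d) := Equiv.ofBijective _
        ((Finite.injective_iff_bijective).mp hg) with hτ
      refine ⟨⟨f, τ⟩, Finset.mem_product.mpr ⟨Finset.mem_filter.mpr ⟨mem_univ _,
        (s.orderEmbOfFin hsc).strictMono⟩, mem_univ _⟩, ?_⟩
      funext i
      show f (τ i) = p i
      rw [hτ]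
      simp only [Equiv.ofBijective_apply, hfdef]
      rw [← Finset.coe_orderIsoOfFin_apply, OrderIso.apply_symm_apply]
    · exact fun q hq => rfl
  rw [← step3, Finset.sum_product]
  refine Finset.sum_congr rfl fun f hf => ?_
  exact sum_perm_eq_det_mul (Matrix.of fun i j : Fin d => A i (f j))
    (Matrix.of fun i j : Fin d => B (f i) j)


lemma getD_zero_of_all {l : List ℕ} (h : ∀ y ∈ l, y = 0) (i : ℕ) : l.getD i 0 = 0 := by
  rcases lt_or_ge i l.length with hi | hi
  · rw [List.getD_eq_getElem _ _ hi]
    exact h _ (List.getElem_mem hi)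
  · exact List.getD_eq_default _ _ hi

lemma getD_anti {l : List ℕ} (hl : l.Pairwise (fun a b => b ≤ a)) :
    ∀ {a b : ℕ}, a ≤ b → l.getD b 0 ≤ l.getD a 0 := by
  induction l with
  | nil => intro a b _; simp
  | cons x t ih =>
    intro a b hab
    rw [List.pairwise_cons] at hl
    match a, b with
    | 0, 0 => exact le_refl _
    | 0, b + 1 =>
      show (x :: t).getD (b + 1) 0 ≤ x
      rw [List.getD_cons_succ]
      rcases lt_or_ge b t.length with hb | hb
      · rw [List.getD_eq_getElem _ _ hb]
        exact hl.1 _ (List.getElem_mem hb)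
      · rw [List.getD_eq_default _ _ hb]; exact Nat.zero_le x
    | a + 1, b + 1 =>
      rw [List.getD_cons_succ, List.getD_cons_succ]
      exact ih hl.2 (Nat.succ_le_succ_iff.mp hab)

lemma sorted_rev {l : List ℕ} (h : l.Pairwise (· ≤ ·)) :
    l.reverse.Pairwise (fun a b => b ≤ a) := by
  rw [List.pairwise_reverse]
  exact h

lemma sorted_rev_parts {j : ℕ} (ν : j.Partition) :
    ((ν.parts.sort (· ≤ ·)).reverse).Pairwise (fun a b => b ≤ a) :=
  sorted_rev (Multiset.pairwise_sort _ _)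

lemma nthPart_anti {j : ℕ} (ν : j.Partition) {a b : ℕ} (h : a ≤ b) :
    nthPart ν b ≤ nthPart ν a :=
  getD_anti (sorted_rev_parts ν) (Nat.sub_le_sub_right h 1)

lemma nthPart_le {j : ℕ} (ν : j.Partition) (i : ℕ) : nthPart ν i ≤ j := by
  unfold nthPart
  set l := (ν.parts.sort (· ≤ ·)).reverse with hl
  rcases lt_or_ge (i - 1) l.length with h | h
  · rw [List.getD_eq_getElem _ _ h]
    have hm : l[i-1] ∈ l := List.getElem_mem h
    have hmem : ∀ y ∈ l, y ∈ ν.parts := by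
      intro y hy
      rw [hl, List.mem_reverse] at hy
      rwa [← Multiset.mem_coe, Multiset.sort_eq] at hy
    have hm2 : l[i-1] ∈ ν.parts := hmem _ hm
    calc l[i-1] ≤ ν.parts.sum := Multiset.single_le_sum (fun _ _ => Nat.zero_le _) _ hm2
    _ = j := ν.parts_sum
  · rw [List.getD_eq_default _ _ h]; exact Nat.zero_le _

lemma sum_getD (l : List ℕ) : ∀ d, l.length ≤ d →
    ∑ i ∈ Finset.range d, l.getD i 0 = l.sum := by
  induction l with
  | nil => intro d _; simp
  | cons x t ih =>
    intro d hd
    obtain ⟨d', rfl⟩ : ∃ d', d = d' + 1 := ⟨d - 1, by simp at hd; omega⟩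
    rw [Finset.sum_range_succ']
    simp only [List.getD_cons_succ, List.getD_cons_zero]
    rw [ih d' (by simp at hd; omega)]
    simp [add_comm]

lemma sum_nthPart {j : ℕ} (ν : j.Partition) {d : ℕ} (hd : ν.parts.card ≤ d) :
    ∑ i : Fin d, nthPart ν ((i : ℕ) + 1) = j := by
  have hlen : ((ν.parts.sort (· ≤ ·)).reverse).length ≤ d := by
    rw [List.length_reverse, Multiset.length_sort]; exact hd
  calc ∑ i : Fin d, nthPart ν ((i : ℕ) + 1)
      = ∑ i ∈ Finset.range d, ((ν.parts.sort (· ≤ ·)).reverse).getD i 0 := by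
        rw [← Fin.sum_univ_eq_sum_range]
        exact Finset.sum_congr rfl fun i _ => by simp [nthPart]
    _ = ((ν.parts.sort (· ≤ ·)).reverse).sum := sum_getD _ d hlen
    _ = ((ν.parts.sort (· ≤ ·) : Multiset ℕ)).sum := by
          rw [List.sum_reverse, Multiset.sum_coe]
    _ = ν.parts.sum := by rw [Multiset.sort_eq]
    _ = j := ν.parts_sum

lemma getD_filter_pos {l : List ℕ} (hl : l.Pairwise (fun a b => b ≤ a)) :
    ∀ i : ℕ, (l.filter (fun x => x ≠ 0)).getD i 0 = l.getD i 0 := by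
  induction l with
  | nil => intro i; simp
  | cons x t ih =>
    intro i
    rw [List.pairwise_cons] at hl
    rcases Nat.eq_zero_or_pos x with hx | hx
    · subst hx
      have hall : ∀ y ∈ (0 : ℕ) :: t, y = 0 := by
        intro y hy
        rcases List.mem_cons.mp hy with h | h
        · exact h
        · exact Nat.le_zero.mp (hl.1 y h)
      have h1 : ((0 : ℕ) :: t).filter (fun x => x ≠ 0) = [] := by
        rw [List.filter_eq_nil_iff]
        intro a ha
        simp [hall a ha]
      rw [h1, getD_zero_of_all hall i]
      simp
    · have h1 : (x :: t).filter (fun y => y ≠ 0) = x :: t.filter (fun y => y ≠ 0) := by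
        rw [List.filter_cons_of_pos (by simp; omega)]
      rw [h1]
      match i with
      | 0 => rfl
      | i + 1 =>
        rw [List.getD_cons_succ, List.getD_cons_succ]
        exact ih hl.2 i

/-- The partition with parts the nonzero values of `v`. -/
def partOf {d : ℕ} (v : Fin d → ℕ) :
    Nat.Partition (((List.ofFn v).filter (fun x => x ≠ 0)).sum) where
  parts := (((List.ofFn v).filter (fun x => x ≠ 0)) : Multiset ℕ)
  parts_pos := by
    intro i hi
    rw [Multiset.mem_coe, List.mem_filter] at hi
    have := hi.2
    simp at this
    omega
  parts_sum := by rw [Multiset.sum_coe]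

lemma partOf_card {d : ℕ} (v : Fin d → ℕ) : (partOf v).parts.card ≤ d := by
  show (((List.ofFn v).filter (fun x => x ≠ 0)) : Multiset ℕ).card ≤ d
  rw [Multiset.coe_card]
  calc ((List.ofFn v).filter (fun x => x ≠ 0)).length ≤ (List.ofFn v).length :=
        List.length_filter_le _ _
    _ = d := List.length_ofFn

lemma sort_coe {l : List ℕ} (h : l.Pairwise (· ≤ ·)) :
    Multiset.sort (l : Multiset ℕ) (· ≤ ·) = l :=
  List.Perm.eq_of_pairwise' (Multiset.pairwise_sort _ _) h
    (Multiset.coe_eq_coe.mp (Multiset.sort_eq _ _))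

lemma sorted_ofFn {d : ℕ} {v : Fin d → ℕ} (hv : Monotone v) :
    (List.ofFn v).Pairwise (· ≤ ·) := by
  rw [List.pairwise_iff_getElem]
  intro i j hi hj hij
  simp only [List.getElem_ofFn]
  exact hv (by simp [Fin.le_def]; omega)

lemma partOf_sort {d : ℕ} {v : Fin d → ℕ} (hv : Monotone v) :
    (partOf v).parts.sort (· ≤ ·) = (List.ofFn v).filter (fun x => x ≠ 0) :=
  sort_coe ((sorted_ofFn hv).filter _)

lemma nthPart_partOf {d : ℕ} {v : Fin d → ℕ} (hv : Monotone v) (i : ℕ) :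
    nthPart (partOf v) (i + 1) = if h : i < d then v ⟨d - 1 - i, by omega⟩ else 0 := by
  unfold nthPart
  rw [partOf_sort hv]
  simp only [Nat.add_sub_cancel]
  rw [← List.filter_reverse, getD_filter_pos (sorted_rev (sorted_ofFn hv))]
  rcases lt_or_ge i d with h | h
  · have hlen : i < (List.ofFn v).reverse.length := by simp [h]
    rw [List.getD_eq_getElem _ _ hlen, dif_pos h]
    rw [List.getElem_reverse]
    simp only [List.getElem_ofFn]
    congr 1
    apply Fin.ext
    simp
  · rw [List.getD_eq_default _ _ (by simp; omega), dif_neg (by omega)]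

lemma filter_sum_eq (l : List ℕ) : (l.filter (fun x => x ≠ 0)).sum = l.sum := by
  induction l with
  | nil => rfl
  | cons x t ih =>
    rcases Nat.eq_zero_or_pos x with hx | hx
    · subst hx
      rw [List.filter_cons_of_neg (by simp), List.sum_cons, ih]
      omega
    · rw [List.filter_cons_of_pos (by simp; omega), List.sum_cons, List.sum_cons, ih]

lemma partOf_sum {d : ℕ} (v : Fin d → ℕ) :
    ((List.ofFn v).filter (fun x => x ≠ 0)).sum = ∑ k : Fin d, v k := by
  rw [filter_sum_eq, List.sum_ofFn]

lemma sigma_eq_of_parts_eq {x y : ℕ} {a : x.Partition} {b : y.Partition}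
    (h : a.parts = b.parts) : (⟨x, a⟩ : Σ k : ℕ, k.Partition) = ⟨y, b⟩ := by
  obtain ⟨pa, hpos, hsum⟩ := a
  obtain ⟨pb, hpos', hsum'⟩ := b
  simp only at h
  subst h
  subst hsum
  subst hsum'
  rfl


lemma smono_le {d N : ℕ} {f : Fin d → Fin N} (hf : StrictMono f) :
    ∀ (bv : ℕ) (hb : bv < d) (a : Fin d), (a : ℕ) ≤ bv →
      (f a : ℕ) + (bv - (a : ℕ)) ≤ f ⟨bv, hb⟩ := by
  intro bv
  induction bv with
  | zero =>
    intro hb a ha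
    have : a = ⟨0, hb⟩ := Fin.ext (Nat.le_zero.mp ha)
    subst this
    simp
  | succ b ih =>
    intro hb a ha
    rcases Nat.lt_or_ge (a : ℕ) (b + 1) with h | h
    · have hb' : b < d := by omega
      have h1 := ih hb' a (by omega)
      have h2 : f ⟨b, hb'⟩ < f ⟨b + 1, hb⟩ := hf (by simp [Fin.lt_def])
      rw [Fin.lt_def] at h2
      omega
    · have : a = ⟨b + 1, hb⟩ := Fin.ext (show (a : ℕ) = b + 1 by omega)
      subst this
      simp

lemma smono_val_le {d N : ℕ} {f : Fin d → Fin N} (hf : StrictMono f) (k : Fin d) :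
    (k : ℕ) ≤ f k := by
  have h := smono_le hf (k : ℕ) k.isLt ⟨0, k.pos⟩ (Nat.zero_le _)
  simp only [Fin.eta] at h
  omega

lemma smono_vf_mono {d N : ℕ} {f : Fin d → Fin N} (hf : StrictMono f) :
    Monotone (fun k : Fin d => (f k : ℕ) - (k : ℕ)) := by
  intro a b hab
  have hab' : (a : ℕ) ≤ (b : ℕ) := hab
  have h := smono_le hf (b : ℕ) b.isLt a hab'
  simp only [Fin.eta] at h
  simp only []
  omega

lemma skew_vanish {A : Type} [CommRing A] (hv : ℤ → A) (h0 : ∀ z : ℤ, z < 0 → hv z = 0)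
    {n j d : ℕ} (lam : n.Partition) (ν : j.Partition)
    (hl : lam.parts.card ≤ d) (hν : ν.parts.card ≤ d) (hj : n < j) :
    skewJT hv lam ν d = 0 := by
  have hex : ∃ t : Fin d, nthPart lam ((t : ℕ) + 1) < nthPart ν ((t : ℕ) + 1) := by
    by_contra h
    push_neg at h
    have hle : (∑ i : Fin d, nthPart ν ((i : ℕ) + 1)) ≤ ∑ i : Fin d, nthPart lam ((i : ℕ) + 1) :=
      Finset.sum_le_sum fun i _ => h i
    rw [sum_nthPart ν hν, sum_nthPart lam hl] at hle
    omega
  obtain ⟨t, ht⟩ := hex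
  unfold skewJT
  rw [Matrix.det_apply']
  apply Finset.sum_eq_zero
  intro σ _
  have hex2 : ∃ c : Fin d, c ≤ t ∧ t ≤ σ c := by
    by_contra hc
    push_neg at hc
    have hmaps : ∀ c ∈ Finset.Iic t, σ c ∈ Finset.Iio t := by
      intro c hct
      exact Finset.mem_Iio.mpr (hc c (Finset.mem_Iic.mp hct))
    have hcard := Finset.card_le_card_of_injOn σ hmaps (σ.injective.injOn)
    rw [Fin.card_Iic, Fin.card_Iio] at hcard
    omega
  obtain ⟨c, hct, htc⟩ := hex2
  refine mul_eq_zero_of_right _ (Finset.prod_eq_zero (Finset.mem_univ c) ?_)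
  simp only [Matrix.of_apply]
  apply h0
  have h1 : nthPart lam ((σ c : ℕ) + 1) ≤ nthPart lam ((t : ℕ) + 1) :=
    nthPart_anti lam (by have := Fin.le_def.mp htc; omega)
  have h2 : nthPart ν ((t : ℕ) + 1) ≤ nthPart ν ((c : ℕ) + 1) :=
    nthPart_anti ν (by have := Fin.le_def.mp hct; omega)
  have h3 : (c : ℕ) ≤ (σ c : ℕ) := by
    have := Fin.le_def.mp hct
    have := Fin.le_def.mp htc
    omega
  omega

lemma hInt_neg {A : Type} [CommRing A] [Algebra ℚ A] (pv : ℕ → A) {z : ℤ} (hz : z < 0) :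
    hInt pv z = 0 := by
  rw [hInt, if_pos hz]

lemma ofFn_nthPart_eq {j d : ℕ} (ν : j.Partition) (hν : ν.parts.card ≤ d) :
    List.ofFn (fun k : Fin d => nthPart ν (d - (k : ℕ)))
      = List.replicate (d - (ν.parts.sort (· ≤ ·)).length) 0 ++ ν.parts.sort (· ≤ ·) := by
  set S := ν.parts.sort (· ≤ ·) with hS
  have hc : S.length ≤ d := by rw [hS, Multiset.length_sort]; exact hν
  apply List.ext_getElem
  · simp only [List.length_ofFn, List.length_append, List.length_replicate]
    omega
  intro k hk1 hk2
  have hkd : k < d := by simpa using hk1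
  rw [List.getElem_ofFn]
  show nthPart ν (d - (k : ℕ)) = _
  unfold nthPart
  rw [← hS]
  rcases Nat.lt_or_ge k (d - S.length) with hcase | hcase
  · rw [List.getD_eq_default _ _ (by rw [List.length_reverse]; omega)]
    have hrep : k < (List.replicate (d - S.length) (0 : ℕ)).length := by
      rw [List.length_replicate]; omega
    rw [List.getElem_append_left hrep, List.getElem_replicate]
  · have hS0 : 0 < S.length := by omega
    have hp : d - (k : ℕ) - 1 < S.reverse.length := by
      rw [List.length_reverse]; omega
    rw [List.getD_eq_getElem _ _ hp, List.getElem_reverse]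
    have hrep : (List.replicate (d - S.length) (0 : ℕ)).length ≤ k := by
      rw [List.length_replicate]; omega
    rw [List.getElem_append_right hrep]
    have e1 : S[S.length - 1 - (d - ↑k - 1)]'(by omega)
        = S.getD (S.length - 1 - (d - ↑k - 1)) 0 := (List.getD_eq_getElem _ _ (by omega)).symm
    have e2 : S[k - (List.replicate (d - S.length) (0:ℕ)).length]'(by
          simp only [List.length_replicate]; omega)
        = S.getD (k - (List.replicate (d - S.length) (0:ℕ)).length) 0 :=
      (List.getD_eq_getElem _ _ (by simp only [List.length_replicate]; omega)).symm
    rw [e1, e2]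
    congr 1
    simp only [List.length_replicate]
    omega

lemma filter_replicate_append (c : ℕ) (S : List ℕ) (hS : ∀ x ∈ S, x ≠ 0) :
    (List.replicate c (0 : ℕ) ++ S).filter (fun x => x ≠ 0) = S := by
  rw [List.filter_append]
  have h1 : (List.replicate c (0 : ℕ)).filter (fun x => x ≠ 0) = [] := by
    rw [List.filter_eq_nil_iff]
    intro a ha
    have := List.eq_of_mem_replicate ha
    simp [this]
  have h2 : S.filter (fun x => x ≠ 0) = S := by
    rw [List.filter_eq_self]
    intro a ha
    simpa using hS a ha
  rw [h1, h2, List.nil_append]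

lemma sum_nthPart_rev {j : ℕ} (ν : j.Partition) {d : ℕ} (hd : ν.parts.card ≤ d) :
    ∑ k : Fin d, nthPart ν (d - (k : ℕ)) = j := by
  refine Eq.trans ?_ (sum_nthPart ν hd)
  apply Fintype.sum_equiv Fin.revPerm
  intro x
  have hx : (x : ℕ) < d := x.isLt
  have : ((Fin.revPerm x : Fin d) : ℕ) = d - 1 - (x : ℕ) := by
    simp [Fin.revPerm, Fin.val_rev]
    omega
  rw [this]
  congr 1
  omega

lemma nthPart_partOf_rev {d : ℕ} {v : Fin d → ℕ} (hv : Monotone v) (i : Fin d) :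
    nthPart (partOf v) (d - (i : ℕ)) = v i := by
  have hi : (i : ℕ) < d := i.isLt
  have h1 : d - (i : ℕ) = (d - (i : ℕ) - 1) + 1 := by omega
  rw [h1, nthPart_partOf hv, dif_pos (show d - (i : ℕ) - 1 < d by omega)]
  congr 1
  exact Fin.ext (by simp; omega)

end TW11

/-- Cauchy–Binet for the Tracy–Widom determinant:
`TW(λ,μ) = ∑_ν s_{λ/ν}(X) s̃_{μ/ν}(Y)`, summed over partitions `ν` with at most `d` parts
(only `ν ⊆ λ, μ` contribute, so the sum is truncated at `|ν| ≤ min(|λ|,|μ|)`). -/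
theorem stmt_11 {n m : ℕ} (lam : n.Partition) (mu : m.Partition) (d : ℕ)
    (hl : lam.parts.card ≤ d) (hm : mu.parts.card ≤ d) :
    (TWmat lam mu d).det = ∑ j ∈ range (min n m + 1),
      ∑ ν ∈ (univ : Finset j.Partition).filter (fun ν => ν.parts.card ≤ d),
        skewJT (hInt PX) lam ν d * skewJT (hInt PY) mu ν d := by
  classical
  set N := d + n + m with hN
  set AA : Matrix (Fin d) (Fin N) SymF2 := Matrix.of fun i k =>
    hInt PY (((i : ℕ) : ℤ) + 1 - (((k : ℕ) : ℤ) + 1) + nthPart mu (d - (i : ℕ))) with hAA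
  set BB : Matrix (Fin N) (Fin d) SymF2 := Matrix.of fun k j =>
    hInt PX (((j : ℕ) : ℤ) + 1 - (((k : ℕ) : ℤ) + 1) + nthPart lam (d - (j : ℕ))) with hBB
  have hTW : TWmat lam mu d = Matrix.of fun i j => ∑ k : Fin N, AA i k * BB k j := by
    refine Matrix.ext fun i j => ?_
    show (∑ k ∈ Icc 1 (d + n + m),
      hInt PY (((i : ℕ) : ℤ) + 1 - (k : ℤ) + nthPart mu (d - (i : ℕ))) *
      hInt PX (((j : ℕ) : ℤ) + 1 - (k : ℤ) + nthPart lam (d - (j : ℕ))))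
      = ∑ k : Fin N, AA i k * BB k j
    simp only [hAA, hBB, Matrix.of_apply]
    rw [← Finset.Ico_add_one_right_eq_Icc, Finset.sum_Ico_eq_sum_range]
    have hfin := Fin.sum_univ_eq_sum_range (fun t : ℕ =>
      hInt PY (((i : ℕ) : ℤ) + 1 - ((t : ℤ) + 1) + nthPart mu (d - (i : ℕ))) *
      hInt PX (((j : ℕ) : ℤ) + 1 - ((t : ℤ) + 1) + nthPart lam (d - (j : ℕ)))) N
    rw [hfin]
    have hrange : d + n + m + 1 - 1 = N := by omega
    rw [hrange]
    refine Finset.sum_congr rfl fun k hk => ?_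
    congr 1 <;> [skip; skip] <;> congr 1 <;> push_cast <;> ring
  rw [hTW, TW11.cauchyBinet AA BB]
  have key : ∀ f ∈ (univ : Finset (Fin d → Fin N)).filter StrictMono,
      (Matrix.of fun i j : Fin d => AA i (f j)).det *
        (Matrix.of fun i j : Fin d => BB (f i) j).det
      = skewJT (hInt PX) lam (TW11.partOf fun k : Fin d => (f k : ℕ) - (k : ℕ)) d *
        skewJT (hInt PY) mu (TW11.partOf fun k : Fin d => (f k : ℕ) - (k : ℕ)) d := by
    intro f hf
    have hsm : StrictMono f := by simpa using (Finset.mem_filter.mp hf).2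
    have hmono := TW11.smono_vf_mono hsm
    have hle := fun k => TW11.smono_val_le hsm k
    set v : Fin d → ℕ := fun k => (f k : ℕ) - (k : ℕ) with hv
    have hX : (Matrix.of fun i j : Fin d => BB (f i) j).det
        = skewJT (hInt PX) lam (TW11.partOf v) d := by
      have hmat : (Matrix.of fun i j : Fin d => BB (f i) j)
          = ((Matrix.of fun i j : Fin d =>
              hInt PX ((nthPart lam ((i : ℕ) + 1) : ℤ) - nthPart (TW11.partOf v) ((j : ℕ) + 1)
                - ((i : ℕ) + 1) + ((j : ℕ) + 1))).transpose).submatrix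
              (⇑(Fin.revPerm : Equiv.Perm (Fin d))) (⇑(Fin.revPerm : Equiv.Perm (Fin d))) := by
        refine Matrix.ext fun i j => ?_
        have hi : (i : ℕ) < d := i.isLt
        have hj : (j : ℕ) < d := j.isLt
        have hri : ((Fin.revPerm i : Fin d) : ℕ) = d - 1 - (i : ℕ) := by
          simp [Fin.revPerm, Fin.val_rev]; omega
        have hrj : ((Fin.revPerm j : Fin d) : ℕ) = d - 1 - (j : ℕ) := by
          simp [Fin.revPerm, Fin.val_rev]; omega
        simp only [Matrix.submatrix_apply, Matrix.transpose_apply, Matrix.of_apply, hBB,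
          hri, hrj]
        have e1 : d - 1 - (j : ℕ) + 1 = d - (j : ℕ) := by omega
        have e2 : d - 1 - (i : ℕ) + 1 = d - (i : ℕ) := by omega
        rw [e1, e2, TW11.nthPart_partOf_rev hmono i]
        congr 1
        have h1 : (i : ℕ) ≤ (f i : ℕ) := hle i
        have h2 : v i + (i : ℕ) = ((f i : Fin N) : ℕ) := by simp only [hv]; omega
        omega
      rw [hmat, Matrix.det_submatrix_equiv_self, Matrix.det_transpose]
      rfl
    have hY : (Matrix.of fun i j : Fin d => AA i (f j)).det
        = skewJT (hInt PY) mu (TW11.partOf v) d := by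
      have hmat : (Matrix.of fun i j : Fin d => AA i (f j))
          = (Matrix.of fun i j : Fin d =>
              hInt PY ((nthPart mu ((i : ℕ) + 1) : ℤ) - nthPart (TW11.partOf v) ((j : ℕ) + 1)
                - ((i : ℕ) + 1) + ((j : ℕ) + 1))).submatrix
              (⇑(Fin.revPerm : Equiv.Perm (Fin d))) (⇑(Fin.revPerm : Equiv.Perm (Fin d))) := by
        refine Matrix.ext fun i j => ?_
        have hi : (i : ℕ) < d := i.isLt
        have hj : (j : ℕ) < d := j.isLt
        have hri : ((Fin.revPerm i : Fin d) : ℕ) = d - 1 - (i : ℕ) := by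
          simp [Fin.revPerm, Fin.val_rev]; omega
        have hrj : ((Fin.revPerm j : Fin d) : ℕ) = d - 1 - (j : ℕ) := by
          simp [Fin.revPerm, Fin.val_rev]; omega
        simp only [Matrix.submatrix_apply, Matrix.of_apply, hAA, hri, hrj]
        have e1 : d - 1 - (i : ℕ) + 1 = d - (i : ℕ) := by omega
        have e2 : d - 1 - (j : ℕ) + 1 = d - (j : ℕ) := by omega
        rw [e1, e2, TW11.nthPart_partOf_rev hmono j]
        congr 1
        have h1 : (j : ℕ) ≤ (f j : ℕ) := hle j
        have h2 : v j + (j : ℕ) = ((f j : Fin N) : ℕ) := by simp only [hv]; omega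
        omega
      rw [hmat, Matrix.det_submatrix_equiv_self]
      rfl
    rw [hX, hY, mul_comm]
  rw [Finset.sum_congr rfl key]
  rw [← Finset.sum_filter_add_sum_filter_not
    ((univ : Finset (Fin d → Fin N)).filter StrictMono)
    (fun f => (∑ k : Fin d, ((f k : ℕ) - (k : ℕ))) ≤ min n m)]
  have hzero : (∑ f ∈ (((univ : Finset (Fin d → Fin N)).filter StrictMono).filter
      (fun f => ¬ (∑ k : Fin d, ((f k : ℕ) - (k : ℕ))) ≤ min n m)),
        skewJT (hInt PX) lam (TW11.partOf fun k : Fin d => (f k : ℕ) - (k : ℕ)) d *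
        skewJT (hInt PY) mu (TW11.partOf fun k : Fin d => (f k : ℕ) - (k : ℕ)) d) = 0 := by
    apply Finset.sum_eq_zero
    intro f hf
    have hgt : min n m < ∑ k : Fin d, ((f k : ℕ) - (k : ℕ)) := by
      have := (Finset.mem_filter.mp hf).2
      omega
    have hsum := TW11.partOf_sum (fun k : Fin d => (f k : ℕ) - (k : ℕ))
    rcases (show n < (((List.ofFn fun k : Fin d => (f k : ℕ) - (k : ℕ)).filter
        (fun x => x ≠ 0)).sum) ∨ m < (((List.ofFn fun k : Fin d => (f k : ℕ) - (k : ℕ)).filter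
        (fun x => x ≠ 0)).sum) by rw [hsum]; omega) with hcase | hcase
    · exact mul_eq_zero_of_left (TW11.skew_vanish (hInt PX)
        (fun z hz => TW11.hInt_neg PX hz) lam _ hl (TW11.partOf_card _) hcase) _
    · exact mul_eq_zero_of_right _ (TW11.skew_vanish (hInt PY)
        (fun z hz => TW11.hInt_neg PY hz) mu _ hm (TW11.partOf_card _) hcase)
  rw [hzero, add_zero, Finset.sum_sigma']
  set im : (Fin d → Fin N) → (Σ k : ℕ, k.Partition) :=
    fun f => ⟨_, TW11.partOf fun k : Fin d => (f k : ℕ) - (k : ℕ)⟩ with him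
  set jm : (Σ k : ℕ, k.Partition) → (Fin d → Fin N) :=
    fun x k => if h : nthPart x.2 (d - (k : ℕ)) + (k : ℕ) < N then
      (⟨nthPart x.2 (d - (k : ℕ)) + (k : ℕ), h⟩ : Fin N)
      else ⟨0, Nat.lt_of_lt_of_le k.pos (by omega)⟩ with hjm
  have hjval : ∀ (x : Σ k : ℕ, k.Partition) (k : Fin d),
      nthPart x.2 (d - (k : ℕ)) + (k : ℕ) < N →
      ((jm x k : ℕ) = nthPart x.2 (d - (k : ℕ)) + (k : ℕ)) := by
    intro x k h
    simp only [hjm]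
    rw [dif_pos h]
  have hbound : ∀ (x : Σ k : ℕ, k.Partition), x.1 ≤ n + m →
      ∀ k : Fin d, nthPart x.2 (d - (k : ℕ)) + (k : ℕ) < N := by
    intro x hxs k
    have h1 := TW11.nthPart_le x.2 (d - (k : ℕ))
    have h2 : (k : ℕ) < d := k.isLt
    omega
  refine Finset.sum_nbij' im jm ?_ ?_ ?_ ?_ ?_
  · -- im maps into sigma set
    intro f hf
    rw [Finset.mem_filter, Finset.mem_filter] at hf
    rw [Finset.mem_sigma]
    refine ⟨?_, Finset.mem_filter.mpr ⟨Finset.mem_univ _, TW11.partOf_card _⟩⟩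
    show (((List.ofFn fun k : Fin d => ((f k : ℕ) - (k : ℕ))).filter
      (fun x => x ≠ 0)).sum) ∈ range (min n m + 1)
    rw [Finset.mem_range, TW11.partOf_sum]
    have := hf.2
    omega
  · -- jm maps into F₁
    intro x hx
    rw [Finset.mem_sigma, Finset.mem_range] at hx
    obtain ⟨hx1, hx2⟩ := hx
    have hxc : x.2.parts.card ≤ d := by simpa using (Finset.mem_filter.mp hx2).2
    have hb := hbound x (by omega)
    rw [Finset.mem_filter, Finset.mem_filter]
    refine ⟨⟨Finset.mem_univ _, ?_⟩, ?_⟩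
    · intro a b hab
      have hab' := Fin.lt_def.mp hab
      rw [Fin.lt_def, hjval x a (hb a), hjval x b (hb b)]
      have h1 : nthPart x.2 (d - (a : ℕ)) ≤ nthPart x.2 (d - (b : ℕ)) :=
        TW11.nthPart_anti x.2 (by omega)
      omega
    · have he : (∑ k : Fin d, ((jm x k : ℕ) - (k : ℕ)))
          = ∑ k : Fin d, nthPart x.2 (d - (k : ℕ)) := by
        refine Finset.sum_congr rfl fun k _ => ?_
        rw [hjval x k (hb k)]
        omega
      show (∑ k : Fin d, ((jm x k : ℕ) - (k : ℕ))) ≤ min n m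
      rw [he, TW11.sum_nthPart_rev x.2 hxc]
      omega
  · -- left inverse
    intro f hf
    rw [Finset.mem_filter, Finset.mem_filter] at hf
    have hsm : StrictMono f := hf.1.2
    have hmono := TW11.smono_vf_mono hsm
    have hle := fun k => TW11.smono_val_le hsm k
    funext k
    have hrec : nthPart (TW11.partOf fun k : Fin d => (f k : ℕ) - (k : ℕ)) (d - (k : ℕ))
        = (f k : ℕ) - (k : ℕ) := TW11.nthPart_partOf_rev hmono k
    have hb : nthPart (im f).2 (d - (k : ℕ)) + (k : ℕ) < N := by
      show nthPart (TW11.partOf fun k : Fin d => (f k : ℕ) - (k : ℕ)) (d - (k : ℕ))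
        + (k : ℕ) < N
      rw [hrec]
      have := hle k
      have := (f k).isLt
      omega
    apply Fin.ext
    rw [hjval (im f) k hb]
    show nthPart (TW11.partOf fun k : Fin d => (f k : ℕ) - (k : ℕ)) (d - (k : ℕ))
        + (k : ℕ) = (f k : ℕ)
    rw [hrec]
    have := hle k
    omega
  · -- right inverse
    intro x hx
    rw [Finset.mem_sigma, Finset.mem_range] at hx
    obtain ⟨hx1, hx2⟩ := hx
    have hxc : x.2.parts.card ≤ d := by simpa using (Finset.mem_filter.mp hx2).2
    have hb := hbound x (by omega)
    have hvf : (fun k : Fin d => ((jm x k : ℕ) - (k : ℕ)))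
        = fun k : Fin d => nthPart x.2 (d - (k : ℕ)) := by
      funext k
      rw [hjval x k (hb k)]
      omega
    refine TW11.sigma_eq_of_parts_eq ?_
    show (TW11.partOf fun k : Fin d => ((jm x k : ℕ) - (k : ℕ))).parts = x.2.parts
    rw [hvf]
    show ((((List.ofFn fun k : Fin d => nthPart x.2 (d - (k : ℕ))).filter
      (fun y => y ≠ 0))) : Multiset ℕ) = x.2.parts
    rw [TW11.ofFn_nthPart_eq x.2 hxc, TW11.filter_replicate_append _ _ (fun y hy => by
      have hyp : y ∈ x.2.parts := by rwa [← Multiset.mem_coe, Multiset.sort_eq] at hy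
      have hpos := x.2.parts_pos hyp
      omega)]
    conv_rhs => rw [← Multiset.sort_eq x.2.parts (· ≤ ·)]
  · -- values agree
    intro f hf
    rfl
end
end

section
/- Let λ, μ be partitions of length at most d and define TW(λ,μ) = det(A·B) with A_{i,k} = h̃_{i−k+μ_{d−i+1}}, B_{k,j} = h_{j−k+λ_{d−j+1}}. Then TW(λ,μ) = det( TW((λ_i + d − i), (μ_j + d − j)) )_{1 ≤ i,j ≤ d}, where TW((r),(s)) = Σ_{k=0}^{min(r,s)} h_{r−k} h̃_{s−k}. -/
open Finset MvPolynomial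

open scoped Classical

noncomputable section

/-- The rank-one Tracy–Widom expression `R(r,s) = ∑_{k=0}^{min(r,s)} h̃_{s-k} h_{r-k}`. -/
def Rrs (r s : ℕ) : SymF2 :=
  ∑ k ∈ range (min r s + 1), hInt PY ((s : ℤ) - (k : ℤ)) * hInt PX ((r : ℤ) - (k : ℤ))

lemma hInt_of_neg {A : Type} [CommRing A] [Algebra ℚ A] (pv : ℕ → A) {k : ℤ} (h : k < 0) :
    hInt pv k = 0 := if_pos h

lemma nthPart_le {n : ℕ} (μ : n.Partition) (i : ℕ) : nthPart μ i ≤ n := by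
  unfold nthPart
  set L := (μ.parts.sort (· ≤ ·)).reverse with hL
  rcases lt_or_ge (i - 1) L.length with h | h
  · have hmem : L.getD (i - 1) 0 ∈ L := by
      rw [List.getD_eq_getElem L 0 h]
      exact List.getElem_mem h
    have hp : L.getD (i - 1) 0 ∈ μ.parts := by
      rwa [hL, List.mem_reverse, Multiset.mem_sort] at hmem
    exact (Multiset.le_sum_of_mem hp).trans_eq μ.parts_sum
  · rw [List.getD_eq_default _ _ h]
    exact Nat.zero_le n

lemma TWmat_entry {n m : ℕ} (lam : n.Partition) (mu : m.Partition) (d : ℕ)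
    (i j : Fin d) :
    TWmat lam mu d i j = Rrs (nthPart lam (d - (j : ℕ)) + (j : ℕ))
      (nthPart mu (d - (i : ℕ)) + (i : ℕ)) := by
  set r0 := nthPart lam (d - (j : ℕ)) with hr0
  set s0 := nthPart mu (d - (i : ℕ)) with hs0
  have hrn : r0 ≤ n := nthPart_le lam _
  have hsm : s0 ≤ m := nthPart_le mu _
  show (∑ k ∈ Icc 1 (d + n + m),
      hInt PY (((i : ℕ) : ℤ) + 1 - (k : ℤ) + s0) *
      hInt PX (((j : ℕ) : ℤ) + 1 - (k : ℤ) + r0)) = _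
  rw [Rrs]
  rw [← Finset.Ico_add_one_right_eq_Icc, Finset.sum_Ico_eq_sum_range]
  simp only [Nat.add_sub_cancel]
  have hstep : ∀ t : ℕ, hInt PY (((i : ℕ) : ℤ) + 1 - ((1 + t : ℕ) : ℤ) + s0) *
      hInt PX (((j : ℕ) : ℤ) + 1 - ((1 + t : ℕ) : ℤ) + r0) =
      hInt PY (((s0 + (i : ℕ) : ℕ) : ℤ) - (t : ℤ)) *
      hInt PX (((r0 + (j : ℕ) : ℕ) : ℤ) - (t : ℤ)) := by
    intro t
    congr 2 <;> push_cast <;> ring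
  simp only [hstep]
  symm
  apply Finset.sum_subset
  · apply Finset.range_subset_range.mpr
    have : (j : ℕ) < d := j.isLt
    have hmin := min_le_left (r0 + (j : ℕ)) (s0 + (i : ℕ))
    omega
  · intro t _ ht
    rw [Finset.mem_range, not_lt] at ht
    rcases min_cases (r0 + (j : ℕ)) (s0 + (i : ℕ)) with ⟨hmin, _⟩ | ⟨hmin, _⟩
    · rw [hmin] at ht
      have : ((r0 + (j : ℕ) : ℕ) : ℤ) - (t : ℤ) < 0 := by
        have : r0 + (j : ℕ) < t := ht
        push_cast
        omega
      rw [hInt_of_neg PX this, mul_zero]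
    · rw [hmin] at ht
      have : ((s0 + (i : ℕ) : ℕ) : ℤ) - (t : ℤ) < 0 := by
        have : s0 + (i : ℕ) < t := ht
        push_cast
        omega
      rw [hInt_of_neg PY this, zero_mul]

/-- `TW(λ,μ) = det ( TW((λ_i + d - i), (μ_j + d - j)) )_{1 ≤ i,j ≤ d}`. -/
theorem stmt_15 {n m : ℕ} (lam : n.Partition) (mu : m.Partition) (d : ℕ)
    (hl : lam.parts.card ≤ d) (hm : mu.parts.card ≤ d) :
    (TWmat lam mu d).det = Matrix.det (Matrix.of fun i j : Fin d =>
      Rrs (nthPart lam ((i : ℕ) + 1) + d - ((i : ℕ) + 1))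
          (nthPart mu ((j : ℕ) + 1) + d - ((j : ℕ) + 1))) := by
  set C : Matrix (Fin d) (Fin d) SymF2 := Matrix.of fun i j : Fin d =>
      Rrs (nthPart lam ((i : ℕ) + 1) + d - ((i : ℕ) + 1))
          (nthPart mu ((j : ℕ) + 1) + d - ((j : ℕ) + 1)) with hC
  have key : TWmat lam mu d = (C.transpose).submatrix (⇑(Fin.revPerm)) (⇑(Fin.revPerm)) := by
    ext i j
    rw [Matrix.submatrix_apply, Matrix.transpose_apply, TWmat_entry]
    simp only [hC, Matrix.of_apply, Fin.revPerm_apply]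
    have hi : (i.rev : ℕ) = d - ((i : ℕ) + 1) := Fin.val_rev i
    have hj : (j.rev : ℕ) = d - ((j : ℕ) + 1) := Fin.val_rev j
    have hid : (i : ℕ) < d := i.isLt
    have hjd : (j : ℕ) < d := j.isLt
    have hj2 : (j.rev : ℕ) + 1 = d - (j : ℕ) := by omega
    have hi2 : (i.rev : ℕ) + 1 = d - (i : ℕ) := by omega
    rw [hj2, hi2]
    generalize nthPart lam (d - (j : ℕ)) = a
    generalize nthPart mu (d - (i : ℕ)) = b
    rw [show a + (j : ℕ) = a + d - (d - (j : ℕ)) by omega,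
        show b + (i : ℕ) = b + d - (d - (i : ℕ)) by omega]
  rw [key, Matrix.det_submatrix_equiv_self, Matrix.det_transpose]
end
end
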